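/- Let ∗ be a star operation on an integral domain D. Then the set of ∗̃-invertible ∗̃-ideals of D coincides with the set of ∗_f-invertible ∗_f-ideals of D, and hence Cl^{∗̃}(D) = Cl^{∗_f}(D). In particular, Cl^w(D) = Cl^t(D). -/

import Mathlib

noncomputable section

/-- The finite-type star operation `∗_f` associated to `∗`:
`I^{∗_f} := ⋃ {J^∗ : J ⊆ I nonzero finitely generated}`. -/
def finTypeOp (D K : Type*) [CommRing D] [Field K] [Algebra D K]
    (st : Submodule D K → Submodule D K) (I : Submodule D K) : Submodule D K :=
  ⨆ (J : Submodule D K) (_ : J ≠ ⊥) (_ : J.FG) (_ : J ≤ I), st J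

/-- The stable finite-type star operation `∗̃ = ∗_w` associated to `∗`:
`I^{∗̃} := ⋃ {(I : H) : H a nonzero finitely generated ideal of D with H^∗ = D}`. -/
def wTypeOp (D K : Type*) [CommRing D] [Field K] [Algebra D K]
    (st : Submodule D K → Submodule D K) (I : Submodule D K) : Submodule D K :=
  ⨆ (H : Ideal D) (_ : H ≠ ⊥) (_ : H.FG)
    (_ : st (Submodule.map (Algebra.linearMap D K) H) = 1),
    I / Submodule.map (Algebra.linearMap D K) H

/-- The `v`-operation `E ↦ (E⁻¹)⁻¹` on `D`-submodules of `K`. -/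
def vOp (D K : Type*) [CommRing D] [Field K] [Algebra D K] (E : Submodule D K) :
    Submodule D K :=
  (1 : Submodule D K) / ((1 : Submodule D K) / E)


namespace StarAux

open Submodule

variable {D K : Type*} [CommRing D] [IsDomain D] [Field K] [Algebra D K] [IsFractionRing D K]

local notation "Frac" => IsFractional (nonZeroDivisors D)

lemma frac_one : Frac (1 : Submodule D K) :=
  FractionalIdeal.isFractional_of_le_one _ le_rfl

lemma frac_of_le {A B : Submodule D K} (hB : Frac B) (h : A ≤ B) : Frac A :=
  FractionalIdeal.isFractional_of_le (J := ⟨B, hB⟩) h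

lemma one_ne_bot : (1 : Submodule D K) ≠ ⊥ := by
  intro h
  have : (1 : K) ∈ (1 : Submodule D K) := by
    simpa using Submodule.algebraMap_mem (1 : D)
  rw [h] at this
  simp at this

lemma mul_ne_bot {A B : Submodule D K} (hA : A ≠ ⊥) (hB : B ≠ ⊥) : A * B ≠ ⊥ := by
  obtain ⟨a, haA, ha⟩ := (Submodule.ne_bot_iff A).mp hA
  obtain ⟨b, hbB, hb⟩ := (Submodule.ne_bot_iff B).mp hB
  exact (Submodule.ne_bot_iff _).mpr ⟨a * b, Submodule.mul_mem_mul haA hbB, mul_ne_zero ha hb⟩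

lemma span_singleton_ne_bot {x : K} (hx : x ≠ 0) : Submodule.span D {x} ≠ ⊥ := by
  simpa [Submodule.span_singleton_eq_bot] using hx

/-- Bundled star-operation hypotheses. -/
structure IsStar (st : Submodule D K → Submodule D K) : Prop where
  frac : ∀ I : Submodule D K, I ≠ ⊥ → Frac I → Frac (st I) ∧ st I ≠ ⊥
  prin : ∀ x : K, x ≠ 0 → st (Submodule.span D {x}) = Submodule.span D {x}
  hmul : ∀ x : K, x ≠ 0 → ∀ I : Submodule D K, I ≠ ⊥ → Frac I →
      st (Submodule.span D {x} * I) = Submodule.span D {x} * st I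
  mono : ∀ I J : Submodule D K, I ≠ ⊥ → Frac I → J ≠ ⊥ → Frac J → I ≤ J → st I ≤ st J
  ext : ∀ I : Submodule D K, I ≠ ⊥ → Frac I → I ≤ st I
  idem : ∀ I : Submodule D K, I ≠ ⊥ → Frac I → st (st I) = st I

variable {st : Submodule D K → Submodule D K}

lemma IsStar.one (hst : IsStar st) : st (1 : Submodule D K) = 1 := by
  have := hst.prin (1 : K) one_ne_zero
  rwa [← Submodule.one_eq_span] at this

/-- `st A * B ≤ st (A * B)`. -/
lemma IsStar.mul_left (hst : IsStar st) {A B : Submodule D K} (hAne : A ≠ ⊥) (hA : Frac A)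
    (hBne : B ≠ ⊥) (hB : Frac B) : st A * B ≤ st (A * B) := by
  refine Submodule.mul_le.mpr fun a ha b hb => ?_
  by_cases hb0 : b = 0
  · simpa [hb0] using zero_mem (st (A * B))
  have h1 : Submodule.span D {b} * A ≤ A * B := by
    calc Submodule.span D {b} * A ≤ B * A :=
          mul_le_mul_left (Submodule.span_le.mpr (Set.singleton_subset_iff.mpr hb)) A
      _ = A * B := mul_comm A B ▸ rfl
  have h2 : st (Submodule.span D {b} * A) ≤ st (A * B) :=
    hst.mono _ _ (mul_ne_bot (span_singleton_ne_bot hb0) hAne)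
      ((FractionalIdeal.isFractional_span_singleton b).mul hA)
      (mul_ne_bot hAne hBne) (hA.mul hB) h1
  rw [hst.hmul b hb0 A hAne hA] at h2
  have : b * a ∈ st (A * B) :=
    h2 (Submodule.mem_span_singleton_mul.mpr ⟨a, ha, rfl⟩)
  rwa [mul_comm b a] at this

lemma IsStar.st_mul (hst : IsStar st) {A B : Submodule D K} (hAne : A ≠ ⊥) (hA : Frac A)
    (hBne : B ≠ ⊥) (hB : Frac B) : st (st A * B) = st (A * B) := by
  obtain ⟨hstAfrac, hstAne⟩ := hst.frac A hAne hA
  refine le_antisymm ?_ ?_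
  · have h1 : st (st A * B) ≤ st (st (A * B)) :=
      hst.mono _ _ (mul_ne_bot hstAne hBne) (hstAfrac.mul hB)
        ((hst.frac _ (mul_ne_bot hAne hBne) (hA.mul hB)).2)
        ((hst.frac _ (mul_ne_bot hAne hBne) (hA.mul hB)).1)
        (hst.mul_left hAne hA hBne hB)
    rwa [hst.idem _ (mul_ne_bot hAne hBne) (hA.mul hB)] at h1
  · exact hst.mono _ _ (mul_ne_bot hAne hBne) (hA.mul hB)
      (mul_ne_bot hstAne hBne) (hstAfrac.mul hB)
      (mul_le_mul' (hst.ext A hAne hA) le_rfl)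

/-- Any star operation is dominated by the `v`-operation. -/
lemma IsStar.le_vOp (hst : IsStar st) {J : Submodule D K} (hJne : J ≠ ⊥) (hJ : Frac J) :
    st J ≤ vOp D K J := by
  intro a ha
  rw [vOp, Submodule.mem_div_iff_forall_mul_mem]
  intro y hy
  by_cases hy0 : y = 0
  · simpa [hy0] using zero_mem (1 : Submodule D K)
  have h1 : Submodule.span D {y} * J ≤ 1 := by
    refine Submodule.mul_le.mpr fun m hm b hb => ?_
    obtain ⟨c, rfl⟩ := Submodule.mem_span_singleton.mp hm
    have : y * b ∈ (1 : Submodule D K) :=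
      Submodule.mem_div_iff_forall_mul_mem.mp hy b hb
    rw [smul_mul_assoc]
    exact Submodule.smul_mem _ c this
  have h2 : st (Submodule.span D {y} * J) ≤ (1 : Submodule D K) := by
    have := hst.mono _ _ (mul_ne_bot (span_singleton_ne_bot hy0) hJne)
      (frac_of_le frac_one h1) one_ne_bot frac_one h1
    rwa [hst.one] at this
  rw [hst.hmul y hy0 J hJne hJ] at h2
  have : y * a ∈ (1 : Submodule D K) :=
    h2 (Submodule.mem_span_singleton_mul.mpr ⟨a, ha, rfl⟩)
  rwa [mul_comm y a] at this

lemma one_mem_one' : (1 : K) ∈ (1 : Submodule D K) := by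
  simpa using Submodule.algebraMap_mem (1 : D)

lemma map_linearMap_le_one (H : Ideal D) :
    Submodule.map (Algebra.linearMap D K) H ≤ 1 := by
  rw [Submodule.one_eq_range]
  rintro y ⟨d, -, rfl⟩
  exact LinearMap.mem_range_self _ d

lemma map_linearMap_ne_bot {H : Ideal D} (hH : H ≠ ⊥) :
    Submodule.map (Algebra.linearMap D K) H ≠ ⊥ := by
  obtain ⟨d, hd, hd0⟩ := (Submodule.ne_bot_iff H).mp hH
  refine (Submodule.ne_bot_iff _).mpr ⟨algebraMap D K d, ⟨d, hd, rfl⟩, ?_⟩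
  exact IsFractionRing.to_map_ne_zero_of_mem_nonZeroDivisors
    (mem_nonZeroDivisors_of_ne_zero hd0)

lemma map_linearMap_top : Submodule.map (Algebra.linearMap D K) (⊤ : Ideal D) = 1 := by
  rw [Submodule.map_top, Submodule.one_eq_range]

lemma map_linearMap_mul (H1 H2 : Ideal D) :
    Submodule.map (Algebra.linearMap D K) (H1 * H2) =
      Submodule.map (Algebra.linearMap D K) H1 * Submodule.map (Algebra.linearMap D K) H2 :=
  Submodule.map_mul H1 H2 (Algebra.ofId D K)

lemma mul_le_left {M N : Submodule D K} (hN : N ≤ 1) : M * N ≤ M := by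
  refine Submodule.mul_le.mpr fun m hm n hn => ?_
  obtain ⟨c, rfl⟩ := Submodule.mem_one.mp (hN hn)
  rw [mul_comm, ← Algebra.smul_def]
  exact Submodule.smul_mem _ _ hm

lemma top_fg : (⊤ : Ideal D).FG := ⟨{1}, by simp⟩

lemma mem_wTypeOp (hst : IsStar st) {I : Submodule D K} {x : K}
    (hx : x ∈ wTypeOp D K st I) :
    ∃ H : Ideal D, H ≠ ⊥ ∧ H.FG ∧
      st (Submodule.map (Algebra.linearMap D K) H) = 1 ∧
      x ∈ I / Submodule.map (Algebra.linearMap D K) H := by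
  have hzero : ∃ H : Ideal D, H ≠ ⊥ ∧ H.FG ∧
      st (Submodule.map (Algebra.linearMap D K) H) = 1 ∧
      (0 : K) ∈ I / Submodule.map (Algebra.linearMap D K) H :=
    ⟨⊤, bot_ne_top.symm, top_fg, by rw [map_linearMap_top, hst.one], zero_mem _⟩
  simp only [wTypeOp] at hx
  refine Submodule.iSup_induction
    (motive := fun y => ∃ H : Ideal D, H ≠ ⊥ ∧ H.FG ∧
      st (Submodule.map (Algebra.linearMap D K) H) = 1 ∧
      y ∈ I / Submodule.map (Algebra.linearMap D K) H) _ hx ?_ hzero ?_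
  · intro H y hy
    by_cases h1 : H ≠ ⊥
    · rw [iSup_pos h1] at hy
      by_cases h2 : H.FG
      · rw [iSup_pos h2] at hy
        by_cases h3 : st (Submodule.map (Algebra.linearMap D K) H) = 1
        · rw [iSup_pos h3] at hy
          exact ⟨H, h1, h2, h3, hy⟩
        · rw [iSup_neg h3, Submodule.mem_bot] at hy; subst hy; exact hzero
      · rw [iSup_neg h2, Submodule.mem_bot] at hy; subst hy; exact hzero
    · rw [iSup_neg h1, Submodule.mem_bot] at hy; subst hy; exact hzero
  · rintro a b ⟨H1, h1ne, h1fg, h1st, h1d⟩ ⟨H2, h2ne, h2fg, h2st, h2d⟩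
    refine ⟨H1 * H2, by simp [Ideal.mul_eq_bot, h1ne, h2ne], Submodule.FG.mul h1fg h2fg, ?_, ?_⟩
    · rw [map_linearMap_mul]
      have e1 := hst.st_mul (A := Submodule.map (Algebra.linearMap D K) H1)
        (B := Submodule.map (Algebra.linearMap D K) H2)
        (map_linearMap_ne_bot h1ne) (frac_of_le frac_one (map_linearMap_le_one H1))
        (map_linearMap_ne_bot h2ne) (frac_of_le frac_one (map_linearMap_le_one H2))
      rw [h1st, Submodule.one_mul] at e1
      rw [← e1, h2st]
    · rw [Submodule.mem_div_iff_forall_mul_mem]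
      intro z hz
      rw [map_linearMap_mul] at hz
      have hle1 : Submodule.map (Algebra.linearMap D K) H1 *
          Submodule.map (Algebra.linearMap D K) H2 ≤
          Submodule.map (Algebra.linearMap D K) H1 :=
        mul_le_left (map_linearMap_le_one H2)
      have hle2 : Submodule.map (Algebra.linearMap D K) H1 *
          Submodule.map (Algebra.linearMap D K) H2 ≤
          Submodule.map (Algebra.linearMap D K) H2 := by
        rw [mul_comm]; exact mul_le_left (map_linearMap_le_one H1)
      have hx1 := Submodule.mem_div_iff_forall_mul_mem.mp h1d z (hle1 hz)
      have hx2 := Submodule.mem_div_iff_forall_mul_mem.mp h2d z (hle2 hz)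
      rw [add_mul]; exact add_mem hx1 hx2

lemma mem_finTypeOp (hst : IsStar st) {I : Submodule D K} {x : K}
    (hIne : I ≠ ⊥) (hI : Frac I) (hx : x ∈ finTypeOp D K st I) :
    ∃ J : Submodule D K, J ≠ ⊥ ∧ J.FG ∧ J ≤ I ∧ x ∈ st J := by
  obtain ⟨y, hyI, hy0⟩ := (Submodule.ne_bot_iff I).mp hIne
  have hzero : ∃ J : Submodule D K, J ≠ ⊥ ∧ J.FG ∧ J ≤ I ∧ (0 : K) ∈ st J :=
    ⟨Submodule.span D {y}, span_singleton_ne_bot hy0, Submodule.fg_span_singleton y,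
      Submodule.span_le.mpr (Set.singleton_subset_iff.mpr hyI), zero_mem _⟩
  simp only [finTypeOp] at hx
  refine Submodule.iSup_induction
    (motive := fun z => ∃ J : Submodule D K, J ≠ ⊥ ∧ J.FG ∧ J ≤ I ∧ z ∈ st J) _ hx ?_ hzero ?_
  · intro J z hz
    by_cases h1 : J ≠ ⊥
    · rw [iSup_pos h1] at hz
      by_cases h2 : J.FG
      · rw [iSup_pos h2] at hz
        by_cases h3 : J ≤ I
        · rw [iSup_pos h3] at hz; exact ⟨J, h1, h2, h3, hz⟩
        · rw [iSup_neg h3, Submodule.mem_bot] at hz; subst hz; exact hzero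
      · rw [iSup_neg h2, Submodule.mem_bot] at hz; subst hz; exact hzero
    · rw [iSup_neg h1, Submodule.mem_bot] at hz; subst hz; exact hzero
  · rintro a b ⟨J1, h1ne, h1fg, h1le, h1m⟩ ⟨J2, h2ne, h2fg, h2le, h2m⟩
    have hsne : J1 ⊔ J2 ≠ ⊥ := fun h => h1ne (sup_eq_bot_iff.mp h).1
    have hsle : J1 ⊔ J2 ≤ I := sup_le h1le h2le
    have m1 : st J1 ≤ st (J1 ⊔ J2) :=
      hst.mono _ _ h1ne (frac_of_le hI h1le) hsne (frac_of_le hI hsle) le_sup_left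
    have m2 : st J2 ≤ st (J1 ⊔ J2) :=
      hst.mono _ _ h2ne (frac_of_le hI h2le) hsne (frac_of_le hI hsle) le_sup_right
    exact ⟨J1 ⊔ J2, hsne, h1fg.sup h2fg, hsle, add_mem (m1 h1m) (m2 h2m)⟩

lemma le_wTypeOp (hst : IsStar st) (I : Submodule D K) : I ≤ wTypeOp D K st I := by
  have h1 : I ≤ I / Submodule.map (Algebra.linearMap D K) (⊤ : Ideal D) := by
    rw [map_linearMap_top, Submodule.le_div_iff_mul_le, Submodule.mul_one]
  refine h1.trans ?_
  simp only [wTypeOp]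
  exact le_iSup_of_le ⊤ (le_iSup_of_le bot_ne_top.symm (le_iSup_of_le top_fg
    (le_iSup_of_le (by rw [map_linearMap_top, hst.one]) le_rfl)))

lemma le_finTypeOp (hst : IsStar st) {I : Submodule D K} : I ≤ finTypeOp D K st I := by
  intro x hx
  by_cases hx0 : x = 0
  · simpa [hx0] using zero_mem (finTypeOp D K st I)
  have hle : st (Submodule.span D {x}) ≤ finTypeOp D K st I := by
    simp only [finTypeOp]
    exact le_iSup_of_le (Submodule.span D {x}) (le_iSup_of_le (span_singleton_ne_bot hx0)
      (le_iSup_of_le (Submodule.fg_span_singleton x)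
        (le_iSup_of_le (Submodule.span_le.mpr (Set.singleton_subset_iff.mpr hx)) le_rfl)))
  exact hle (by rw [hst.prin x hx0]; exact Submodule.mem_span_singleton_self x)

lemma wTypeOp_le_finTypeOp (hst : IsStar st) {I : Submodule D K} (hIne : I ≠ ⊥)
    (hI : Frac I) : wTypeOp D K st I ≤ finTypeOp D K st I := by
  intro x hx
  by_cases hx0 : x = 0
  · simpa [hx0] using zero_mem (finTypeOp D K st I)
  obtain ⟨H, hHne, hHfg, hH1, hxH⟩ := mem_wTypeOp hst hx
  set M := Submodule.map (Algebra.linearMap D K) H with hM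
  have hMne : M ≠ ⊥ := map_linearMap_ne_bot hHne
  have hMfrac : Frac M := frac_of_le frac_one (map_linearMap_le_one H)
  have hJle : Submodule.span D {x} * M ≤ I := by
    refine Submodule.mul_le.mpr fun a ha b hb => ?_
    obtain ⟨c, rfl⟩ := Submodule.mem_span_singleton.mp ha
    have hxb : x * b ∈ I := Submodule.mem_div_iff_forall_mul_mem.mp hxH b hb
    rw [smul_mul_assoc]
    exact Submodule.smul_mem _ c hxb
  have hJst : st (Submodule.span D {x} * M) = Submodule.span D {x} := by
    rw [hst.hmul x hx0 M hMne hMfrac, hH1, Submodule.mul_one]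
  have hle : st (Submodule.span D {x} * M) ≤ finTypeOp D K st I := by
    simp only [finTypeOp]
    exact le_iSup_of_le (Submodule.span D {x} * M)
      (le_iSup_of_le (mul_ne_bot (span_singleton_ne_bot hx0) hMne)
        (le_iSup_of_le (Submodule.FG.mul (Submodule.fg_span_singleton x) (Submodule.FG.map _ hHfg))
          (le_iSup_of_le hJle le_rfl)))
  exact hle (by rw [hJst]; exact Submodule.mem_span_singleton_self x)

lemma finTypeOp_le_one (hst : IsStar st) {I : Submodule D K} (hI : I ≤ 1) :
    finTypeOp D K st I ≤ 1 := by
  simp only [finTypeOp]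
  refine iSup_le fun J => iSup_le fun hJne => iSup_le fun _ => iSup_le fun hJI => ?_
  have := hst.mono J 1 hJne (frac_of_le frac_one (hJI.trans hI)) one_ne_bot frac_one
    (hJI.trans hI)
  rwa [hst.one] at this

lemma div_le_div_of_le {I A B : Submodule D K} (h : A ≤ B) : I / B ≤ I / A :=
  fun _ hx => Submodule.mem_div_iff_forall_mul_mem.mpr fun y hy =>
    Submodule.mem_div_iff_forall_mul_mem.mp hx y (h hy)

lemma le_one_div_one_div (E : Submodule D K) :
    E ≤ (1 : Submodule D K) / ((1 : Submodule D K) / E) := by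
  rw [Submodule.le_div_iff_mul_le, mul_comm]
  exact Submodule.le_div_iff_mul_le.mp le_rfl

lemma one_div_one_div_one_div (E : Submodule D K) :
    (1 : Submodule D K) / ((1 : Submodule D K) / ((1 : Submodule D K) / E)) =
      (1 : Submodule D K) / E :=
  le_antisymm (div_le_div_of_le (le_one_div_one_div E)) (le_one_div_one_div _)

lemma one_div_ne_bot {I : Submodule D K} (hI : Frac I) :
    (1 : Submodule D K) / I ≠ ⊥ := by
  obtain ⟨a, haS, ha⟩ := hI
  refine (Submodule.ne_bot_iff _).mpr ⟨algebraMap D K a, ?_,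
    IsFractionRing.to_map_ne_zero_of_mem_nonZeroDivisors haS⟩
  rw [Submodule.mem_div_iff_forall_mul_mem]
  intro b hb
  obtain ⟨c, hc⟩ := ha b hb
  rw [← Algebra.smul_def, ← hc]
  exact Submodule.algebraMap_mem c

lemma frac_one_div {E : Submodule D K} (hE : E ≠ ⊥) :
    Frac ((1 : Submodule D K) / E) := by
  obtain ⟨z, hzE, hz0⟩ := (Submodule.ne_bot_iff E).mp hE
  obtain ⟨⟨d, s⟩, rfl⟩ := IsLocalization.mk'_surjective (nonZeroDivisors D) z
  dsimp only at hzE hz0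
  have hd0 : d ≠ 0 := by
    rintro rfl
    rw [IsLocalization.mk'_zero] at hz0
    exact hz0 rfl
  refine ⟨d, mem_nonZeroDivisors_of_ne_zero hd0, ?_⟩
  intro b hb
  have hzb : b * IsLocalization.mk' K d s ∈ (1 : Submodule D K) :=
    Submodule.mem_div_iff_forall_mul_mem.mp hb _ hzE
  obtain ⟨c, hc⟩ := Submodule.mem_one.mp hzb
  refine ⟨(s : D) * c, ?_⟩
  have hspec := IsLocalization.mk'_spec K d s
  rw [map_mul, hc, Algebra.smul_def, ← hspec]
  ring

lemma one_div_span_singleton {x : K} (hx : x ≠ 0) :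
    (1 : Submodule D K) / Submodule.span D {x} = Submodule.span D {x⁻¹} := by
  ext y
  rw [Submodule.mem_div_iff_forall_mul_mem]
  constructor
  · intro h
    obtain ⟨c, hc⟩ := Submodule.mem_one.mp (h x (Submodule.mem_span_singleton_self x))
    refine Submodule.mem_span_singleton.mpr ⟨c, ?_⟩
    rw [Algebra.smul_def, hc, mul_assoc, mul_inv_cancel₀ hx, mul_one]
  · intro h z hz
    obtain ⟨c, rfl⟩ := Submodule.mem_span_singleton.mp h
    obtain ⟨a, rfl⟩ := Submodule.mem_span_singleton.mp hz
    refine Submodule.mem_one.mpr ⟨c * a, ?_⟩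
    rw [smul_mul_smul_comm, inv_mul_cancel₀ hx, Algebra.smul_def, mul_one]

lemma one_div_span_singleton_mul {x : K} (hx : x ≠ 0) (A : Submodule D K) :
    (1 : Submodule D K) / (Submodule.span D {x} * A) =
      Submodule.span D {x⁻¹} * ((1 : Submodule D K) / A) := by
  ext y
  constructor
  · intro h
    refine Submodule.mem_span_singleton_mul.mpr ⟨x * y, ?_, by field_simp⟩
    rw [Submodule.mem_div_iff_forall_mul_mem]
    intro a ha
    have h2 := Submodule.mem_div_iff_forall_mul_mem.mp h (x * a)
      (Submodule.mul_mem_mul (Submodule.mem_span_singleton_self x) ha)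
    rwa [show y * (x * a) = x * y * a by ring] at h2
  · intro h
    obtain ⟨w, hw, rfl⟩ := Submodule.mem_span_singleton_mul.mp h
    rw [Submodule.mem_div_iff_forall_mul_mem]
    intro z hz
    refine Submodule.mul_induction_on hz (fun m hm a ha => ?_) (fun p q hp hq => ?_)
    · obtain ⟨c, rfl⟩ := Submodule.mem_span_singleton.mp hm
      have hwa : w * a ∈ (1 : Submodule D K) :=
        Submodule.mem_div_iff_forall_mul_mem.mp hw a ha
      have heq : x⁻¹ * w * (c • x * a) = c • (w * a) := by
        rw [Algebra.smul_def, Algebra.smul_def]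
        field_simp
      rw [heq]
      exact Submodule.smul_mem _ c hwa
    · rw [mul_add]
      exact add_mem hp hq

lemma vOp_span_singleton_mul {x : K} (hx : x ≠ 0) (A : Submodule D K) :
    vOp D K (Submodule.span D {x} * A) = Submodule.span D {x} * vOp D K A := by
  simp only [vOp]
  rw [one_div_span_singleton_mul hx, one_div_span_singleton_mul (inv_ne_zero hx), inv_inv]

lemma isStar_vOp : IsStar (vOp D K) := by
  refine ⟨?_, ?_, ?_, ?_, ?_, ?_⟩
  · intro I hIne hI
    have h1 : (1 : Submodule D K) / I ≠ ⊥ := one_div_ne_bot hI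
    refine ⟨frac_one_div h1, fun h => hIne ?_⟩
    have h2 : I ≤ vOp D K I := le_one_div_one_div I
    rw [h] at h2
    exact le_bot_iff.mp h2
  · intro x hx
    simp only [vOp]
    rw [one_div_span_singleton hx, one_div_span_singleton (inv_ne_zero hx), inv_inv]
  · intro x hx I _ _
    exact vOp_span_singleton_mul hx I
  · intro I J _ _ _ _ h
    exact div_le_div_of_le (div_le_div_of_le h)
  · intro I _ _
    exact le_one_div_one_div I
  · intro I _ _
    simp only [vOp]
    exact one_div_one_div_one_div _

theorem mainAux (hst : IsStar st) (I : Submodule D K) (hIne : I ≠ ⊥) (hI : Frac I) :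
    (wTypeOp D K st I = I ∧ wTypeOp D K st (I * ((1 : Submodule D K) / I)) = 1) ↔
      (finTypeOp D K st I = I ∧ finTypeOp D K st (I * ((1 : Submodule D K) / I)) = 1) := by
  have hinv_ne : (1 : Submodule D K) / I ≠ ⊥ := one_div_ne_bot hI
  have hprod_le : I * ((1 : Submodule D K) / I) ≤ 1 := by
    rw [mul_comm]
    exact Submodule.le_div_iff_mul_le.mp le_rfl
  have hprod_ne : I * ((1 : Submodule D K) / I) ≠ ⊥ := mul_ne_bot hIne hinv_ne
  have hprod_frac : Frac (I * ((1 : Submodule D K) / I)) := frac_of_le frac_one hprod_le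
  constructor
  · rintro ⟨h1, h2⟩
    have h1mem : (1 : K) ∈ wTypeOp D K st (I * ((1 : Submodule D K) / I)) := by
      rw [h2]; exact one_mem_one'
    obtain ⟨H, hHne, hHfg, hH1, hH2⟩ := mem_wTypeOp hst h1mem
    have hHle : Submodule.map (Algebra.linearMap D K) H ≤ I * ((1 : Submodule D K) / I) := by
      intro z hz
      have h3 := Submodule.mem_div_iff_forall_mul_mem.mp hH2 z hz
      rwa [one_mul] at h3
    constructor
    · refine le_antisymm ?_ (le_finTypeOp hst)
      intro x hx
      obtain ⟨J, hJne, hJfg, hJI, hxJ⟩ := mem_finTypeOp hst hIne hI hx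
      have hxv : x ∈ (1 : Submodule D K) / ((1 : Submodule D K) / I) := by
        have hv : st J ≤ vOp D K J := hst.le_vOp hJne (frac_of_le hI hJI)
        have hv2 : vOp D K J ≤ (1 : Submodule D K) / ((1 : Submodule D K) / I) :=
          div_le_div_of_le (div_le_div_of_le hJI)
        exact hv2 (hv hxJ)
      have hxI : x ∈ I / Submodule.map (Algebra.linearMap D K) H := by
        rw [Submodule.mem_div_iff_forall_mul_mem]
        intro z hz
        refine Submodule.mul_induction_on (hHle hz) (fun a ha b hb => ?_)
          (fun p q hp hq => ?_)
        · have hxb : x * b ∈ (1 : Submodule D K) :=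
            Submodule.mem_div_iff_forall_mul_mem.mp hxv b hb
          obtain ⟨c, hc⟩ := Submodule.mem_one.mp hxb
          have heq : x * (a * b) = c • a := by
            rw [Algebra.smul_def, hc]; ring
          rw [heq]
          exact Submodule.smul_mem _ c ha
        · rw [mul_add]
          exact add_mem hp hq
      have hxw : x ∈ wTypeOp D K st I := by
        have hle : I / Submodule.map (Algebra.linearMap D K) H ≤ wTypeOp D K st I := by
          simp only [wTypeOp]
          exact le_iSup_of_le H (le_iSup_of_le hHne (le_iSup_of_le hHfg
            (le_iSup_of_le hH1 le_rfl)))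
        exact hle hxI
      rwa [h1] at hxw
    · refine le_antisymm (finTypeOp_le_one hst hprod_le) ?_
      have hle : st (Submodule.map (Algebra.linearMap D K) H) ≤
          finTypeOp D K st (I * ((1 : Submodule D K) / I)) := by
        simp only [finTypeOp]
        exact le_iSup_of_le _ (le_iSup_of_le (map_linearMap_ne_bot hHne)
          (le_iSup_of_le (Submodule.FG.map _ hHfg) (le_iSup_of_le hHle le_rfl)))
      rwa [hH1] at hle
  · rintro ⟨g1, g2⟩
    have h1mem : (1 : K) ∈ finTypeOp D K st (I * ((1 : Submodule D K) / I)) := by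
      rw [g2]; exact one_mem_one'
    obtain ⟨J, hJne, hJfg, hJle, hxJ⟩ := mem_finTypeOp hst hprod_ne hprod_frac h1mem
    have hJfrac : Frac J := frac_of_le hprod_frac hJle
    have hJle1 : J ≤ 1 := hJle.trans hprod_le
    have hJ1 : st J = 1 := by
      refine le_antisymm ?_ ?_
      · have h3 := hst.mono J 1 hJne hJfrac one_ne_bot frac_one hJle1
        rwa [hst.one] at h3
      · rw [Submodule.one_eq_span]
        exact Submodule.span_le.mpr (Set.singleton_subset_iff.mpr hxJ)
    set H : Ideal D := Submodule.comap (Algebra.linearMap D K) J with hHdef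
    have hmapH : Submodule.map (Algebra.linearMap D K) H = J := by
      apply Submodule.map_comap_eq_self
      rw [← Submodule.one_eq_range]
      exact hJle1
    have hHne : H ≠ ⊥ := by
      intro h
      apply hJne
      rw [← hmapH, h, Submodule.map_bot]
    have hHfg : H.FG := Submodule.fg_of_fg_map_injective (Algebra.linearMap D K)
      (IsFractionRing.injective D K) (by rwa [hmapH])
    have hH1 : st (Submodule.map (Algebra.linearMap D K) H) = 1 := by
      rw [hmapH]; exact hJ1
    refine ⟨le_antisymm ((wTypeOp_le_finTypeOp hst hIne hI).trans_eq g1)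
      (le_wTypeOp hst I), ?_⟩
    refine le_antisymm ((wTypeOp_le_finTypeOp hst hprod_ne hprod_frac).trans_eq g2) ?_
    have hdiv : (1 : Submodule D K) ≤
        (I * ((1 : Submodule D K) / I)) / Submodule.map (Algebra.linearMap D K) H := by
      rw [Submodule.le_div_iff_mul_le, Submodule.one_mul, hmapH]
      exact hJle
    refine hdiv.trans ?_
    simp only [wTypeOp]
    exact le_iSup_of_le H (le_iSup_of_le hHne (le_iSup_of_le hHfg
      (le_iSup_of_le hH1 le_rfl)))

end StarAux


/-- **Proposition 2.7.** Let `∗` be a star operation on an integral domain `D`.  Then the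
`∗̃`-invertible `∗̃`-ideals coincide with the `∗_f`-invertible `∗_f`-ideals, and hence
`Cl^{∗̃}(D) = Cl^{∗_f}(D)`.  In particular, `Cl^w(D) = Cl^t(D)`. -/
theorem wTypeOp_invertible_iff_finTypeOp_invertible
    (D K : Type*) [CommRing D] [IsDomain D] [Field K] [Algebra D K] [IsFractionRing D K]
    -- `st` is a star operation on `D`:
    (st : Submodule D K → Submodule D K)
    (hfrac : ∀ I : Submodule D K, I ≠ ⊥ → IsFractional (nonZeroDivisors D) I →
      IsFractional (nonZeroDivisors D) (st I) ∧ st I ≠ ⊥)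
    (hprin : ∀ x : K, x ≠ 0 → st (Submodule.span D {x}) = Submodule.span D {x})
    (hmul : ∀ x : K, x ≠ 0 → ∀ I : Submodule D K, I ≠ ⊥ →
      IsFractional (nonZeroDivisors D) I →
      st (Submodule.span D {x} * I) = Submodule.span D {x} * st I)
    (hmono : ∀ I J : Submodule D K, I ≠ ⊥ → IsFractional (nonZeroDivisors D) I →
      J ≠ ⊥ → IsFractional (nonZeroDivisors D) J → I ≤ J → st I ≤ st J)
    (hext : ∀ I : Submodule D K, I ≠ ⊥ → IsFractional (nonZeroDivisors D) I → I ≤ st I)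
    (hidem : ∀ I : Submodule D K, I ≠ ⊥ → IsFractional (nonZeroDivisors D) I →
      st (st I) = st I) :
    -- a nonzero fractional ideal is a `∗̃`-invertible `∗̃`-ideal iff it is a
    -- `∗_f`-invertible `∗_f`-ideal …
    (∀ I : Submodule D K, I ≠ ⊥ → IsFractional (nonZeroDivisors D) I →
      ((wTypeOp D K st I = I ∧
          wTypeOp D K st (I * ((1 : Submodule D K) / I)) = 1) ↔
        (finTypeOp D K st I = I ∧
          finTypeOp D K st (I * ((1 : Submodule D K) / I)) = 1))) ∧
    -- … in particular (taking `∗ = v`, so that `∗_f = t` and `∗̃ = w`),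
    -- `Cl^w(D) = Cl^t(D)`:
    (∀ I : Submodule D K, I ≠ ⊥ → IsFractional (nonZeroDivisors D) I →
      ((wTypeOp D K (vOp D K) I = I ∧
          wTypeOp D K (vOp D K) (I * ((1 : Submodule D K) / I)) = 1) ↔
        (finTypeOp D K (vOp D K) I = I ∧
          finTypeOp D K (vOp D K) (I * ((1 : Submodule D K) / I)) = 1))) :=
  ⟨fun I hIne hI =>
      StarAux.mainAux ⟨hfrac, hprin, hmul, hmono, hext, hidem⟩ I hIne hI,
    fun I hIne hI => StarAux.mainAux StarAux.isStar_vOp I hIne hI⟩
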